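/- Let α > 1 and suppose there exists n₀ such that for every integer n ≥ n₀ the interval [n^α, (n+1)^α − 1) contains a prime. Then there exists a real number A > 1 such that for every positive integer n, ⌊A^(α^n)⌋ is a prime. -/
import Mathlib


theorem stmt_13 (α : ℝ) (hα : 1 < α)
    (h : ∃ n₀ : ℕ, ∀ n : ℕ, n₀ ≤ n →
      ∃ p : ℕ, p.Prime ∧ (n : ℝ) ^ α ≤ (p : ℝ) ∧ (p : ℝ) < ((n : ℝ) + 1) ^ α - 1) :
    ∃ A : ℝ, 1 < A ∧ ∀ n : ℕ, 0 < n → Prime ⌊A ^ (α ^ n)⌋ := by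
  classical
  obtain ⟨n₀, h⟩ := h
  obtain ⟨q, hqle, hq_prime⟩ := Nat.exists_infinite_primes (max n₀ 2)
  have hαpos : 0 < α := lt_trans one_pos hα
  have hαk : ∀ k : ℕ, (0:ℝ) < α ^ k := fun k => pow_pos hαpos k
  have key : ∀ p : ℕ, max n₀ 2 ≤ p → ∃ r : ℕ, r.Prime ∧ max n₀ 2 ≤ r ∧
      (p:ℝ)^α ≤ r ∧ (r:ℝ) < ((p:ℝ)+1)^α - 1 := by
    intro p hp
    obtain ⟨r, hr, h1, h2⟩ := h p (le_trans (le_max_left _ _) hp)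
    have hp1 : (1:ℝ) ≤ p := by
      have h2' : 2 ≤ p := le_trans (le_max_right _ _) hp
      have : (2:ℝ) ≤ p := by exact_mod_cast h2'
      linarith
    have hple : (p:ℝ) ≤ r := by
      calc (p:ℝ) = (p:ℝ)^(1:ℝ) := (Real.rpow_one _).symm
        _ ≤ (p:ℝ)^α := Real.rpow_le_rpow_of_exponent_le hp1 hα.le
        _ ≤ r := h1
    exact ⟨r, hr, hp.trans (by exact_mod_cast hple), h1, h2⟩
  set S := {p : ℕ // p.Prime ∧ max n₀ 2 ≤ p} with hS
  let F : S → S := fun s => ⟨(key s.1 s.2.2).choose, (key s.1 s.2.2).choose_spec.1,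
    (key s.1 s.2.2).choose_spec.2.1⟩
  have hF : ∀ s : S, ((s.1:ℕ):ℝ)^α ≤ ((F s).1 : ℝ) ∧ (((F s).1:ℕ):ℝ) < ((s.1:ℝ)+1)^α - 1 :=
    fun s => ⟨(key s.1 s.2.2).choose_spec.2.2.1, (key s.1 s.2.2).choose_spec.2.2.2⟩
  let g : ℕ → S := fun k => F^[k] ⟨q, hq_prime, hqle⟩
  let p : ℕ → ℕ := fun k => (g k).1
  have hpprime : ∀ k, (p k).Prime := fun k => (g k).2.1
  have hp2 : ∀ k, 2 ≤ p k := fun k => le_trans (le_max_right _ _) (g k).2.2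
  have hppos : ∀ k, (0:ℝ) < p k := fun k => by
    have := hp2 k; positivity
  have hp1R : ∀ k, (1:ℝ) < p k := fun k => by
    have := hp2 k
    have : (2:ℝ) ≤ p k := by exact_mod_cast this
    linarith
  have hstep : ∀ k, ((p k:ℝ))^α ≤ p (k+1) ∧ ((p (k+1):ℝ)) < ((p k:ℝ)+1)^α - 1 := by
    intro k
    have hg : g (k+1) = F (g k) := Function.iterate_succ_apply' F k _
    have := hF (g k)
    simpa [p, hg] using this
  -- the sequences of logs
  set a : ℕ → ℝ := fun k => Real.log (p k) / α ^ k with ha_def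
  set b : ℕ → ℝ := fun k => Real.log ((p k : ℝ) + 1) / α ^ k with hb_def
  have ha_succ : ∀ k, a k ≤ a (k+1) := by
    intro k
    have h1 := (hstep k).1
    have hlog : α * Real.log (p k) ≤ Real.log (p (k+1)) := by
      rw [← Real.log_rpow (hppos k)]
      exact Real.log_le_log (Real.rpow_pos_of_pos (hppos k) α) h1
    simp only [ha_def]
    rw [div_le_div_iff₀ (hαk k) (hαk (k+1)), pow_succ]
    nlinarith [mul_le_mul_of_nonneg_right hlog (hαk k).le]
  have ha_mono : Monotone a := monotone_nat_of_le_succ ha_succ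
  have hb_succ : ∀ k, b (k+1) < b k := by
    intro k
    have h2 := (hstep k).2
    have hpos : (0:ℝ) < (p k : ℝ) + 1 := by linarith [hppos k]
    have hlog : Real.log ((p (k+1) : ℝ) + 1) < α * Real.log ((p k : ℝ) + 1) := by
      rw [← Real.log_rpow hpos]
      apply Real.log_lt_log (by linarith [hppos (k+1)])
      linarith
    simp only [hb_def]
    rw [div_lt_div_iff₀ (hαk (k+1)) (hαk k), pow_succ]
    nlinarith [mul_lt_mul_of_pos_right hlog (hαk k)]
  have hb_anti : Antitone b := antitone_nat_of_succ_le (fun k => (hb_succ k).le)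
  have hab : ∀ k, a k < b k := by
    intro k
    simp only [ha_def, hb_def]
    exact div_lt_div_of_pos_right (Real.log_lt_log (hppos k) (by linarith [hppos k])) (hαk k)
  have hamb : ∀ m n : ℕ, a m ≤ b n := by
    intro m n
    rcases le_total m n with hmn | hnm
    · exact (ha_mono hmn).trans (hab n).le
    · exact (hab m).le.trans (hb_anti hnm)
  have hbdd : BddAbove (Set.range a) := ⟨b 0, fun x ⟨m, hm⟩ => hm ▸ hamb m 0⟩
  set L := ⨆ m, a m with hL_def
  have hLa : ∀ n, a n ≤ L := fun n => le_ciSup hbdd n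
  have hLb : ∀ n, L < b n := fun n =>
    lt_of_le_of_lt (ciSup_le fun m => hamb m (n+1)) (hb_succ n)
  have hLpos : 0 < L := by
    have h0 : 0 < a 0 := by
      simp only [ha_def, pow_zero]
      have := Real.log_pos (hp1R 0)
      linarith
    exact lt_of_lt_of_le h0 (hLa 0)
  refine ⟨Real.exp L, ?_, ?_⟩
  · exact Real.one_lt_exp_iff.mpr hLpos
  · intro n _
    have hfloor : ⌊Real.exp L ^ (α ^ n)⌋ = (p n : ℤ) := by
      rw [Int.floor_eq_iff]
      constructor
      · -- lower bound
        have hApow : Real.exp L ^ (α ^ n) = Real.exp (L * α ^ n) := by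
          rw [Real.rpow_def_of_pos (Real.exp_pos L), Real.log_exp]
        rw [hApow]
        push_cast
        rw [← Real.exp_log (hppos n)]
        apply Real.exp_le_exp.mpr
        have heq : a n * α ^ n = Real.log (p n) := div_mul_cancel₀ _ (hαk n).ne'
        nlinarith [mul_le_mul_of_nonneg_right (hLa n) (hαk n).le]
      · have hApow : Real.exp L ^ (α ^ n) = Real.exp (L * α ^ n) := by
          rw [Real.rpow_def_of_pos (Real.exp_pos L), Real.log_exp]
        rw [hApow]
        push_cast
        rw [← Real.exp_log (show (0:ℝ) < (p n : ℝ) + 1 by linarith [hppos n])]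
        apply Real.exp_lt_exp.mpr
        have heq : b n * α ^ n = Real.log ((p n : ℝ) + 1) := div_mul_cancel₀ _ (hαk n).ne'
        nlinarith [mul_lt_mul_of_pos_right (hLb n) (hαk n)]
    rw [hfloor]
    exact Nat.prime_iff_prime_int.mp (hpprime n)
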